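/- For every integer n ≥ 4, the cycle C_n of order n satisfies prc(C_n) = rc(C_n) = ⌈n/2⌉. -/

import Mathlib

open SimpleGraph

variable {V : Type*}

/-- A walk is rainbow under edge colouring `c` if its edges receive pairwise distinct colours. -/
def SimpleGraph.Walk.IsRainbow {G : SimpleGraph V} {u v : V} (c : Sym2 V → ℕ) (p : G.Walk u v) :
    Prop :=
  (p.edges.map c).Nodup

/-- `G` is rainbow connected under the edge colouring `c`: any two vertices are joined by a
rainbow path. -/
def SimpleGraph.RainbowConnected (G : SimpleGraph V) (c : Sym2 V → ℕ) : Prop :=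
  ∀ u v : V, ∃ p : G.Walk u v, p.IsPath ∧ p.IsRainbow c

/-- `c` is a proper edge colouring of `G`: adjacent edges receive distinct colours. -/
def SimpleGraph.IsProperEdgeColoring (G : SimpleGraph V) (c : Sym2 V → ℕ) : Prop :=
  ∀ ⦃u v w : V⦄, G.Adj u v → G.Adj u w → v ≠ w → c s(u, v) ≠ c s(u, w)

/-- The colouring `c` uses at most `k` colours on the edges of `G`. -/
def SimpleGraph.ColorsLE (G : SimpleGraph V) (c : Sym2 V → ℕ) (k : ℕ) : Prop :=
  ∀ e ∈ G.edgeSet, c e < k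

/-- The rainbow connection number `rc(G)`. -/
noncomputable def SimpleGraph.rcNumber (G : SimpleGraph V) : ℕ :=
  sInf {k | ∃ c : Sym2 V → ℕ, G.ColorsLE c k ∧ G.RainbowConnected c}

/-- The proper rainbow connection number `prc(G)`. -/
noncomputable def SimpleGraph.prcNumber (G : SimpleGraph V) : ℕ :=
  sInf {k | ∃ c : Sym2 V → ℕ, G.ColorsLE c k ∧ G.IsProperEdgeColoring c ∧ G.RainbowConnected c}

/-- The chromatic index `χ'(G)`. -/
noncomputable def SimpleGraph.chromaticIndex (G : SimpleGraph V) : ℕ :=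
  sInf {k | ∃ c : Sym2 V → ℕ, G.ColorsLE c k ∧ G.IsProperEdgeColoring c}

open Fin.NatCast Fin.CommRing

variable {n : ℕ} [NeZero n]

lemma valOne (hn : 2 ≤ n) : (1 : Fin n).val = 1 := by
  rw [Fin.val_one']; exact Nat.mod_eq_of_lt (by omega)
lemma valCast (a : ℕ) (h : a < n) : ((a : Fin n)).val = a := by
  rw [Fin.val_natCast]; exact Nat.mod_eq_of_lt h
lemma valSub (u v : Fin n) : (u - v).val = (n - v.val + u.val) % n := by rw [Fin.sub_def]

lemma cycAdj (hn : 2 ≤ n) {u v : Fin n} :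
    (cycleGraph n).Adj u v ↔ v = u + 1 ∨ u = v + 1 := by
  rw [cycleGraph_adj']
  have h1 : (1 : Fin n).val = 1 := valOne hn
  constructor
  · rintro (h | h)
    · right
      have h2 : u - v = 1 := Fin.ext (by rw [h, h1])
      have := congrArg (· + v) h2
      simpa [sub_add_cancel, add_comm] using this
    · left
      have h2 : v - u = 1 := Fin.ext (by rw [h, h1])
      have := congrArg (· + u) h2
      simpa [sub_add_cancel, add_comm] using this
  · rintro (rfl | rfl)
    · right; rw [show u + 1 - u = 1 by ring, h1]
    · left; rw [show v + 1 - v = 1 by ring, h1]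

lemma cycAdjSucc (hn : 2 ≤ n) (u : Fin n) : (cycleGraph n).Adj u (u + 1) :=
  (cycAdj hn).2 (Or.inl rfl)

/-- Forward walk of length `l` from `u`. -/
def fwd (hn : 2 ≤ n) (u : Fin n) : (l : ℕ) → (cycleGraph n).Walk u (u + l)
  | 0 => Walk.nil.copy rfl (by simp)
  | l + 1 => ((fwd hn (u + 1) l).copy rfl (by push_cast; ring)).cons (cycAdjSucc hn u)

lemma fwd_length (hn : 2 ≤ n) (u : Fin n) (l : ℕ) : (fwd hn u l).length = l := by
  induction l generalizing u with
  | zero => simp [fwd]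
  | succ l ih => simp [fwd, ih]

lemma fwd_edges (hn : 2 ≤ n) (u : Fin n) (l : ℕ) :
    (fwd hn u l).edges = (List.range l).map (fun (j : ℕ) => s(u + (j:Fin n), u + (j:Fin n) + 1)) := by
  induction l generalizing u with
  | zero => simp [fwd]
  | succ l ih =>
      rw [List.range_succ_eq_map]
      simp only [fwd, Walk.edges_cons, Walk.edges_copy, ih, List.map_cons, List.map_map]
      congr 1
      · norm_num
      · apply List.map_congr_left
        intro j _
        simp only [Function.comp_apply]
        congr 1 <;> push_cast <;> ring

lemma fwd_support (hn : 2 ≤ n) (u : Fin n) (l : ℕ) :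
    (fwd hn u l).support = (List.range (l+1)).map (fun (j : ℕ) => u + (j:Fin n)) := by
  induction l generalizing u with
  | zero => simp [fwd, List.range_succ]
  | succ l ih =>
      rw [List.range_succ_eq_map]
      simp only [fwd, Walk.support_cons, Walk.support_copy, ih, List.map_cons, List.map_map]
      rw [List.range_succ_eq_map]
      simp only [List.map_cons, List.map_map]
      congr 1
      · norm_num
      congr 1
      · norm_num
      · apply List.map_congr_left
        intro j _
        simp only [Function.comp_apply]
        push_cast
        ring

lemma castInj (hn : 2 ≤ n) {i j : ℕ} (hi : i < n) (hj : j < n) (h : (i : Fin n) = j) : i = j := by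
  have := congrArg Fin.val h
  rwa [valCast i hi, valCast j hj] at this

lemma fwd_isPath (hn : 2 ≤ n) (u : Fin n) (l : ℕ) (hl : l < n) : (fwd hn u l).IsPath := by
  rw [Walk.isPath_def, fwd_support]
  apply List.Nodup.map_on _ List.nodup_range
  intro i hi j hj h
  rw [List.mem_range] at hi hj
  exact castInj hn (by omega) (by omega) (add_left_cancel h)

/-- Counting lemma: every walk decomposes into `a` forward and `b` backward steps. -/
lemma walk_count (hn : 2 ≤ n) {u v : Fin n} (p : (cycleGraph n).Walk u v) :
    ∃ a b : ℕ, a + b = p.length ∧ v = u + (a : Fin n) - (b : Fin n) ∧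
      (b = 0 → p.edges = (List.range a).map (fun (j : ℕ) => s(u + (j:Fin n), u + (j:Fin n) + 1))) := by
  induction p with
  | nil => exact ⟨0, 0, by simp, by simp, by simp⟩
  | @cons u w v h q ih =>
      obtain ⟨a, b, hab, hv, hedg⟩ := ih
      rcases (cycAdj hn).1 h with rfl | rfl
      · refine ⟨a + 1, b, by simp [hab]; omega, by rw [hv]; push_cast; ring, ?_⟩
        intro hb
        rw [Walk.edges_cons, hedg hb, List.range_succ_eq_map]
        simp only [List.map_cons, List.map_map]
        congr 1
        · norm_num
        · apply List.map_congr_left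
          intro j _
          simp only [Function.comp_apply]
          congr 1 <;> push_cast <;> ring
      · exact ⟨a, b + 1, by rw [Walk.length_cons]; omega, by rw [hv]; push_cast; ring, by simp⟩

/-- the colouring -/
def col (n : ℕ) [NeZero n] : Sym2 (Fin n) → ℕ :=
  Sym2.lift ⟨fun i j =>
    if j = i + 1 then (if i = j + 1 then min i.val j.val % ((n+1)/2) else i.val % ((n+1)/2))
    else if i = j + 1 then j.val % ((n+1)/2) else 0, by
      intro i j
      dsimp only
      split_ifs with h1 h2 h3 h4 h5 h6 h7 <;> first
        | rfl
        | (rw [min_comm])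
        | (exact absurd h1 (by tauto))
        | (exact absurd h2 (by tauto))
        | (exact absurd h3 (by tauto))
        | tauto⟩

lemma col_lt (hn : 1 ≤ n) (e : Sym2 (Fin n)) : col n e < (n+1)/2 := by
  have hm : 0 < (n+1)/2 := by omega
  induction e using Sym2.inductionOn with
  | hf i j =>
      rw [col, Sym2.lift_mk]
      dsimp only
      split_ifs <;> first | exact Nat.mod_lt _ hm | exact hm

lemma finTwo_ne_zero (hn : 4 ≤ n) : (2 : Fin n) ≠ 0 := by
  intro h
  have := congrArg Fin.val h
  rw [Fin.val_zero] at this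
  have h2 : ((2:ℕ) : Fin n).val = 2 := by
    rw [Fin.val_natCast]; exact Nat.mod_eq_of_lt (by omega)
  have : ((2:ℕ) : Fin n) = (2 : Fin n) := by norm_num
  omega

lemma col_edge (hn : 4 ≤ n) (i : Fin n) : col n s(i, i + 1) = i.val % ((n+1)/2) := by
  rw [col, Sym2.lift_mk]
  dsimp only
  rw [if_pos rfl, if_neg]
  intro h
  have : (0 : Fin n) = 2 := by
    have := congrArg (· - i) h
    simpa [sub_self, add_sub_cancel_left, add_assoc, one_add_one_eq_two] using this
  exact finTwo_ne_zero hn this.symm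

lemma valAdd (u : Fin n) (j : ℕ) : (u + (j : Fin n)).val = (u.val + j) % n := by
  rw [Fin.add_def, Fin.val_natCast]
  conv_rhs => rw [Nat.add_mod]
  rw [Nat.mod_eq_of_lt u.isLt]

lemma not_dvd_between {m d : ℕ} (h1 : m < d) (h2 : d < 2 * m) (hd : m ∣ d) : False := by
  obtain ⟨q, rfl⟩ := hd
  rcases Nat.lt_or_ge q 2 with hq | hq
  · interval_cases q <;> omega
  · have : m * 2 ≤ m * q := Nat.mul_le_mul_left m hq
    omega

lemma key_ne (hn : 4 ≤ n) {a i j l : ℕ} (ha : a < n) (hij : i < j) (hjl : j < l)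
    (hl : l ≤ n / 2) : (a + i) % n % ((n+1)/2) ≠ (a + j) % n % ((n+1)/2) := by
  set m := (n+1)/2 with hm
  intro h
  have hmn : 2 * m = n ∨ 2 * m = n + 1 := by omega
  rcases Nat.lt_or_ge (a + j) n with hj2 | hj2
  · -- both below n
    have hi2 : a + i < n := by omega
    rw [Nat.mod_eq_of_lt hi2, Nat.mod_eq_of_lt hj2] at h
    have hd : m ∣ (a + j) - (a + i) := (Nat.modEq_iff_dvd' (by omega)).1 h
    have := Nat.le_of_dvd (by omega) hd
    omega
  · rcases Nat.lt_or_ge (a + i) n with hi2 | hi2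
    · -- i below, j wraps
      have hj3 : (a + j) % n = a + j - n := by
        rw [Nat.mod_eq_sub_mod hj2]
        exact Nat.mod_eq_of_lt (by omega)
      rw [Nat.mod_eq_of_lt hi2, hj3] at h
      have hd : m ∣ (a + i) - (a + j - n) := (Nat.modEq_iff_dvd' (by omega)).1 h.symm
      exact not_dvd_between (by omega) (by omega) hd
    · -- both wrap
      have hj3 : (a + j) % n = a + j - n := by
        rw [Nat.mod_eq_sub_mod hj2]; exact Nat.mod_eq_of_lt (by omega)
      have hi3 : (a + i) % n = a + i - n := by
        rw [Nat.mod_eq_sub_mod hi2]; exact Nat.mod_eq_of_lt (by omega)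
      rw [hi3, hj3] at h
      have hd : m ∣ (a + j - n) - (a + i - n) := (Nat.modEq_iff_dvd' (by omega)).1 h
      have := Nat.le_of_dvd (by omega) hd
      omega

lemma col_succ_ne (hn : 4 ≤ n) (x : Fin n) :
    col n s(x, x + 1) ≠ col n s(x + 1, x + 1 + 1) := by
  rw [col_edge hn, col_edge hn]
  have h1 : (x + 1).val = (x.val + 1) % n := by
    have : ((1:ℕ) : Fin n) = (1 : Fin n) := by norm_num
    rw [← this, valAdd]
  rw [h1]
  have hx := x.isLt
  have := key_ne hn (a := x.val) (i := 0) (j := 1) (l := 2) hx (by omega) (by omega) (by omega)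
  simpa [Nat.mod_eq_of_lt hx] using this

lemma col_proper (hn : 4 ≤ n) : (cycleGraph n).IsProperEdgeColoring (col n) := by
  intro u v w huv huw hvw
  rcases (cycAdj (n := n) (by omega)).1 huv with h1 | h1 <;>
    rcases (cycAdj (n := n) (by omega)).1 huw with h2 | h2
  · exact absurd (h1.trans h2.symm) hvw
  · subst h1; subst h2
    intro h
    rw [Sym2.eq_swap (a := w + 1) (b := w)] at h
    exact col_succ_ne hn w h.symm
  · subst h2; subst h1
    intro h
    rw [Sym2.eq_swap (a := v + 1) (b := v)] at h
    exact col_succ_ne hn v h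
  · exact absurd (add_right_cancel (h1.symm.trans h2)) hvw

lemma fwd_rainbow (hn : 4 ≤ n) (u : Fin n) (l : ℕ) (hl : l ≤ n / 2) :
    ((fwd (by omega) u l).edges.map (col n)).Nodup := by
  rw [fwd_edges, List.map_map]
  apply List.Nodup.map_on _ List.nodup_range
  intro i hi j hj h
  rw [List.mem_range] at hi hj
  simp only [Function.comp_apply] at h
  rw [col_edge hn, col_edge hn, valAdd, valAdd] at h
  by_contra hne
  rcases Nat.lt_or_ge i j with hij | hij
  · exact key_ne hn u.isLt hij hj hl h
  · exact key_ne hn u.isLt (by omega) hi hl h.symm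

lemma col_rc (hn : 4 ≤ n) (u v : Fin n) :
    ∃ p : (cycleGraph n).Walk u v, p.IsPath ∧ (p.edges.map (col n)).Nodup := by
  have h2 : 2 ≤ n := by omega
  rcases Nat.lt_or_ge (n/2) (v - u).val with hd | hd
  · -- go backwards
    set d' := (u - v).val with hd'
    have hsum : ((v - u).val + (u - v).val) % n = 0 := by
      have : (v - u) + (u - v) = 0 := by ring
      have := congrArg Fin.val this
      rwa [Fin.add_def, Fin.val_zero] at this
    have hne : (v - u).val ≠ 0 := by omega
    have hdd : (v - u).val + d' = n := by
      have hlt : (v - u).val + d' < 2 * n := by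
        have := (v - u).isLt; have := (u - v).isLt; omega
      rcases Nat.lt_or_ge ((v - u).val + d') n with h | h
      · rw [Nat.mod_eq_of_lt h] at hsum; omega
      · rw [Nat.mod_eq_sub_mod h, Nat.mod_eq_of_lt (by omega)] at hsum; omega
    have hd2 : d' ≤ n / 2 := by omega
    have hend : v + (d' : Fin n) = u := by
      rw [hd', Fin.cast_val_eq_self]; ring
    refine ⟨(((fwd h2 v d').copy rfl hend).reverse), ?_, ?_⟩
    · exact (Walk.IsPath.reverse ((Walk.isPath_copy _ rfl hend).2 (fwd_isPath h2 v d' (by omega))))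
    · rw [Walk.edges_reverse, List.map_reverse, List.nodup_reverse, Walk.edges_copy]
      exact fwd_rainbow hn v d' hd2
  · set d := (v - u).val with hdd
    have hend : u + (d : Fin n) = v := by
      rw [hdd, Fin.cast_val_eq_self]; ring
    refine ⟨(fwd h2 u d).copy rfl hend, ?_, ?_⟩
    · exact (Walk.isPath_copy _ rfl hend).2 (fwd_isPath h2 u d (by omega))
    · rw [Walk.edges_copy]
      exact fwd_rainbow hn u d hd

lemma rainbow_length_le {u v : Fin n} {c : Sym2 (Fin n) → ℕ} {k : ℕ}
    (p : (cycleGraph n).Walk u v) (hcol : ∀ e ∈ (cycleGraph n).edgeSet, c e < k)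
    (hr : (p.edges.map c).Nodup) : p.length ≤ k := by
  have hsub : (p.edges.map c).toFinset ⊆ Finset.range k := by
    intro x hx
    rw [List.mem_toFinset] at hx
    obtain ⟨e, he, rfl⟩ := List.mem_map.1 hx
    exact Finset.mem_range.2 (hcol e (p.edges_subset_edgeSet he))
  have h2 := Finset.card_le_card hsub
  rw [List.toFinset_card_of_nodup hr, Finset.card_range, List.length_map,
    Walk.length_edges] at h2
  exact h2

/-- even lower bound -/
lemma lower_even (hn : 4 ≤ n) (hev : n % 2 = 0) {c : Sym2 (Fin n) → ℕ} {k : ℕ}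
    (hcol : ∀ e ∈ (cycleGraph n).edgeSet, c e < k)
    (hrc : ∀ u v : Fin n, ∃ p : (cycleGraph n).Walk u v, (p.edges.map c).Nodup) :
    n / 2 ≤ k := by
  by_contra hk
  push_neg at hk
  obtain ⟨p, hr⟩ := hrc 0 ((n/2 : ℕ) : Fin n)
  have hlen : p.length ≤ k := rainbow_length_le p hcol hr
  obtain ⟨a, b, hab, hv, -⟩ := walk_count (by omega) p
  have ha : a < n := by omega
  have hb : b < n := by omega
  have := congrArg Fin.val hv
  rw [valCast _ (by omega), zero_add, valSub, Fin.val_natCast, Fin.val_natCast,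
    Nat.mod_eq_of_lt ha, Nat.mod_eq_of_lt hb] at this
  rcases Nat.lt_or_ge (n - b + a) n with h | h
  · rw [Nat.mod_eq_of_lt h] at this; omega
  · rw [Nat.mod_eq_sub_mod h, Nat.mod_eq_of_lt (by omega)] at this; omega

section Odd
variable (hn : 4 ≤ n) (hodd : n % 2 = 1) {c : Sym2 (Fin n) → ℕ}
  (hcol : ∀ e ∈ (cycleGraph n).edgeSet, c e < n / 2)
  (hrc : ∀ u v : Fin n, ∃ p : (cycleGraph n).Walk u v, (p.edges.map c).Nodup)

include hn hodd hcol hrc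

lemma window_nodup (i : Fin n) :
    ((List.range (n/2)).map (fun (j : ℕ) => c s(i + (j : Fin n), i + (j : Fin n) + 1))).Nodup := by
  obtain ⟨p, hr⟩ := hrc i (i + ((n/2 : ℕ) : Fin n))
  have hlen : p.length ≤ n / 2 := rainbow_length_le p hcol hr
  obtain ⟨a, b, hab, hv, hed⟩ := walk_count (by omega) p
  have ha : a < n := by omega
  have hb : b < n := by omega
  have hv2 : ((n/2 : ℕ) : Fin n) = (a : Fin n) - b := by
    have := hv
    rw [add_sub_assoc] at this
    exact add_left_cancel this
  have := congrArg Fin.val hv2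
  rw [valCast _ (by omega), valSub, Fin.val_natCast, Fin.val_natCast,
    Nat.mod_eq_of_lt ha, Nat.mod_eq_of_lt hb] at this
  have hb0 : b = 0 ∧ a = n / 2 := by
    rcases Nat.lt_or_ge (n - b + a) n with h | h
    · rw [Nat.mod_eq_of_lt h] at this; omega
    · rw [Nat.mod_eq_sub_mod h, Nat.mod_eq_of_lt (by omega)] at this; omega
  rw [hed hb0.1, List.map_map] at hr
  rw [hb0.2] at hr
  exact hr

lemma f_lt (x : Fin n) : c s(x, x + 1) < n / 2 :=
  hcol _ ((cycleGraph n).mem_edgeSet.2 (cycAdjSucc (by omega) x))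

lemma window_toFinset (i : Fin n) :
    ((List.range (n/2)).map (fun (j : ℕ) => c s(i + (j : Fin n), i + (j : Fin n) + 1))).toFinset
      = Finset.range (n/2) := by
  apply Finset.eq_of_subset_of_card_le
  · intro x hx
    rw [List.mem_toFinset] at hx
    obtain ⟨j, _, rfl⟩ := List.mem_map.1 hx
    exact Finset.mem_range.2 (f_lt hn hodd hcol hrc _)
  · rw [List.toFinset_card_of_nodup (window_nodup hn hodd hcol hrc i), Finset.card_range,
      List.length_map, List.length_range]

lemma f_period (i : Fin n) :
    c s(i + ((n/2 : ℕ) : Fin n), i + ((n/2 : ℕ) : Fin n) + 1) = c s(i, i + 1) := by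
  set K := n / 2 with hK
  set F : ℕ → ℕ := fun t => c s(i + (t : Fin n), i + (t : Fin n) + 1) with hF
  -- window at i+1 is [F 1, ..., F K]
  have hshift : ∀ j : ℕ, (i + 1) + (j : Fin n) = i + ((j + 1 : ℕ) : Fin n) := by
    intro j; push_cast; ring
  have hw1 : ((List.range K).map (fun (j:ℕ) => c s((i+1) + (j : Fin n), (i+1) + (j : Fin n) + 1)))
      = (List.range K).map (fun (j:ℕ) => F (j + 1)) := by
    apply List.map_congr_left
    intro j _
    rw [hshift j]
  have ht1 := window_toFinset hn hodd hcol hrc i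
  have ht2 := window_toFinset hn hodd hcol hrc (i + 1)
  rw [hw1] at ht2
  -- F 0 ∈ window at i+1
  have hmem : F 0 ∈ (List.range K).map (fun (j:ℕ) => F (j + 1)) := by
    rw [← List.mem_toFinset, ht2, ← ht1, List.mem_toFinset]
    exact List.mem_map.2 ⟨0, List.mem_range.2 (show (0:ℕ) < K by omega), by simp [hF]⟩
  obtain ⟨t, ht, hFt⟩ := List.mem_map.1 hmem
  rw [List.mem_range] at ht
  -- F (t+1) = F 0 with 1 ≤ t+1 ≤ K ; nodup of window at i forces t+1 = K
  have hKt : t + 1 = K := by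
    by_contra hne
    have hnd := window_nodup hn hodd hcol hrc i
    have hinj := List.inj_on_of_nodup_map hnd
    have := hinj (List.mem_range.2 (show (0:ℕ) < K by omega))
      (List.mem_range.2 (show t + 1 < K by omega)) hFt.symm
    omega
  rw [hKt] at hFt
  simpa [hF] using hFt

lemma f_pred (i : Fin n) : c s(i, i + 1) = c s(i - 1, i - 1 + 1) := by
  have h1 := f_period hn hodd hcol hrc i
  have h2 := f_period hn hodd hcol hrc (i + ((n/2 : ℕ) : Fin n))
  have key : i + ((n/2 : ℕ) : Fin n) + ((n/2 : ℕ) : Fin n) = i - 1 := by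
    have hh : ((n/2 : ℕ) : Fin n) + ((n/2 : ℕ) : Fin n) = ((n - 1 : ℕ) : Fin n) := by
      rw [← Nat.cast_add]
      congr 1
      omega
    rw [add_assoc, hh]
    have h3 : ((n - 1 : ℕ) : Fin n) = -1 := by
      have h5 : ((n - 1 : ℕ) : Fin n) + 1 = 0 := by
        have h6 : ((n - 1 : ℕ) : Fin n) + ((1:ℕ) : Fin n) = ((n : ℕ) : Fin n) := by
          rw [← Nat.cast_add]; congr 1; omega
        simpa [Fin.natCast_self] using h6
      linear_combination (norm := abel) h5
    rw [h3]
    ring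
  rw [key] at h2
  rw [← h1, ← h2]

lemma f_const (i : Fin n) : c s(i + 1, i + 1 + 1) = c s(i, i + 1) := by
  have h := f_pred hn hodd hcol hrc (i + 1)
  rwa [add_sub_cancel_right] at h

lemma odd_false : False := by
  have hnd := window_nodup hn hodd hcol hrc 0
  have hinj := List.inj_on_of_nodup_map hnd
  have hc := f_const hn hodd hcol hrc (0 : Fin n)
  have h01 : (0 : ℕ) = 1 := by
    apply hinj (List.mem_range.2 (show (0:ℕ) < n/2 by omega))
      (List.mem_range.2 (show (1:ℕ) < n/2 by omega))
    simp only [Nat.cast_zero, Nat.cast_one, add_zero, zero_add] at hc ⊢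
    exact hc.symm
  omega

end Odd


theorem stmt5 (n : ℕ) (hn : 4 ≤ n) :
    (SimpleGraph.cycleGraph n).prcNumber = (n + 1) / 2 ∧
    (SimpleGraph.cycleGraph n).rcNumber = (n + 1) / 2 := by
  haveI : NeZero n := ⟨by omega⟩
  set m := (n + 1) / 2 with hm
  have hcolLE : (cycleGraph n).ColorsLE (col n) m := fun e _ => col_lt (by omega) e
  have hrcC : (cycleGraph n).RainbowConnected (col n) := fun u v => by
    obtain ⟨p, hp, hr⟩ := col_rc hn u v
    exact ⟨p, hp, hr⟩
  have hmemP : m ∈ {k | ∃ c : Sym2 (Fin n) → ℕ, (cycleGraph n).ColorsLE c k ∧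
      (cycleGraph n).IsProperEdgeColoring c ∧ (cycleGraph n).RainbowConnected c} :=
    ⟨col n, hcolLE, col_proper hn, hrcC⟩
  have hmemR : m ∈ {k | ∃ c : Sym2 (Fin n) → ℕ, (cycleGraph n).ColorsLE c k ∧
      (cycleGraph n).RainbowConnected c} := ⟨col n, hcolLE, hrcC⟩
  have hlow : ∀ k ∈ {k | ∃ c : Sym2 (Fin n) → ℕ, (cycleGraph n).ColorsLE c k ∧
      (cycleGraph n).RainbowConnected c}, m ≤ k := by
    rintro k ⟨c, hc, hrc⟩
    have hrc' : ∀ u v : Fin n, ∃ p : (cycleGraph n).Walk u v, (p.edges.map c).Nodup :=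
      fun u v => (hrc u v).elim (fun p hp => ⟨p, hp.2⟩)
    rcases Nat.mod_two_eq_zero_or_one n with he | ho
    · have := lower_even hn he hc hrc'
      omega
    · by_contra hk
      push_neg at hk
      have hc2 : ∀ e ∈ (cycleGraph n).edgeSet, c e < n / 2 :=
        fun e hee => lt_of_lt_of_le (hc e hee) (by omega)
      exact odd_false hn ho hc2 hrc'
  have hrcEq : (cycleGraph n).rcNumber = m :=
    le_antisymm (Nat.sInf_le hmemR) (le_csInf ⟨m, hmemR⟩ hlow)
  have hprcLe : (cycleGraph n).prcNumber ≤ m := Nat.sInf_le hmemP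
  have hprcGe : m ≤ (cycleGraph n).prcNumber :=
    le_csInf ⟨m, hmemP⟩ (fun k hk => hlow k (by obtain ⟨c, h1, h2, h3⟩ := hk; exact ⟨c, h1, h3⟩))
  exact ⟨le_antisymm hprcLe hprcGe, hrcEq⟩
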